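/- Let P_IS be defined by the CAMS-SA recurrence with stage number ℓ ≥ 1, and let s ≥ 0 be fixed. Then the function i ↦ P_IS(i,s) is nondecreasing in i; in particular P_IS(m−m̃, s) ≤ P_IS(m−m̃+1, s) for all valid m, m̃. -/

import Mathlib

/-- Let `P_IS` satisfy the CAMS-SA recurrence with stage number `ℓ ≥ 1`, and fix `s ≥ 0`.
Then `i ↦ P_IS(i,s)` is nondecreasing in `i`. -/
theorem stmt6 (ℓ : ℕ) (hℓ : 1 ≤ ℓ) (PIS : ℕ → ℤ → ℕ∞)
    (hneg : ∀ (m : ℕ) (s : ℤ), s < 0 → PIS m s = ⊤)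
    (h0 : ∀ s : ℤ, 0 ≤ s → PIS 0 s = 0)
    (h1 : ∀ s : ℤ, 0 ≤ s → PIS 1 s = 0)
    (hrec : ∀ (m : ℕ) (s : ℤ), 2 ≤ m → 0 ≤ s →
      PIS m s = min
        (⨅ k ∈ Finset.Icc 1 (m - 1),
          ((k : ℕ∞) + PIS k s + PIS (m - k) (s - 1)))
        (⨅ k ∈ Finset.Icc 1 m,
          (((k - 1 : ℕ) : ℕ∞) + PIS (k - 1) s + PIS (m - k) (s - (ℓ : ℤ)))))
    (s : ℤ) (hs : 0 ≤ s) :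
    Monotone (fun i : ℕ => PIS i s) := by
  have key : ∀ m (t : ℤ), PIS m t ≤ PIS (m + 1) t := by
    intro m
    induction m using Nat.strong_induction_on with
    | _ m IH =>
    intro t
    rcases lt_or_ge t 0 with htneg | ht
    · rw [hneg (m + 1) t htneg]; exact le_top
    rcases Nat.lt_or_ge m 2 with hm | hm
    · interval_cases m
      · rw [h0 t ht]; exact zero_le
      · rw [h1 t ht]; exact zero_le
    · rw [hrec (m + 1) t (by omega) ht]
      have hm' := hrec m t hm ht
      refine le_min (le_iInf₂ ?_) (le_iInf₂ ?_)
      · intro k hk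
        simp only [Finset.mem_Icc] at hk
        rcases eq_or_lt_of_le (show k ≤ m by omega) with rfl | hkm
        · exact le_trans (self_le_add_left _ _) le_self_add
        · have h1' : PIS m t ≤ (k : ℕ∞) + PIS k t + PIS (m - k) (t - 1) := by
            rw [hm']
            exact le_trans (min_le_left _ _)
              (iInf₂_le k (Finset.mem_Icc.mpr ⟨hk.1, by omega⟩))
          have h2' : PIS (m - k) (t - 1) ≤ PIS (m + 1 - k) (t - 1) := by
            have heq : m + 1 - k = (m - k) + 1 := by omega
            rw [heq]; exact IH (m - k) (by omega) (t - 1)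
          exact h1'.trans (add_le_add_right h2' _)
      · intro k hk
        simp only [Finset.mem_Icc] at hk
        rcases eq_or_lt_of_le hk.2 with rfl | hkm
        · simp only [Nat.add_sub_cancel, Nat.sub_self]
          exact le_trans (self_le_add_left _ _) le_self_add
        · have h1' : PIS m t ≤ ((k - 1 : ℕ) : ℕ∞) + PIS (k - 1) t + PIS (m - k) (t - ℓ) := by
            rw [hm']
            exact le_trans (min_le_right _ _)
              (iInf₂_le k (Finset.mem_Icc.mpr ⟨hk.1, by omega⟩))
          have h2' : PIS (m - k) (t - ℓ) ≤ PIS (m + 1 - k) (t - ℓ) := by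
            have heq : m + 1 - k = (m - k) + 1 := by omega
            rw [heq]; exact IH (m - k) (by omega) (t - ℓ)
          exact h1'.trans (add_le_add_right h2' _)
  exact monotone_nat_of_le_succ fun n => key n s
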